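/- In ℝ³, let E₁ be the union of the four sets E₁₁ = {(c+1, −√3·c − 1/√3, s + 4√3·c − (8c+4)/√3) : c ∈ ℝ, s ≤ 1}, E₁₂ = {(c/√3 + 1, c − 1/√3, s − 8c/3 − 4/√3) : c ∈ ℝ, s ≥ 1}, E₁₃ = {(ad/√3 + 1, d − 1/√3, 1 − 2d − 2ad/3 − 4/√3) : a ∈ [−1,1], d ≥ 0}, and E₁₄ = {(ad/√3 + 1, d − 1/√3, 1 − 2d − 2ad/3 − 4/√3) : a ∈ [−1,1], d ≤ 0}. For k ∈ ℤ define A_k : ℝ³ → ℝ³ by A_k(x,y,t) = (x − 2k, y, t + 4ky + 8k/√3). Then for every nonzero integer k, the sets E₁ and A_k(E₁) are disjoint. -/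

import Mathlib

/-- The half-plane E₁₁ in the Heisenberg group ℝ³. -/
noncomputable def E₁₁ : Set (ℝ × ℝ × ℝ) :=
  {p | ∃ c s : ℝ, s ≤ 1 ∧
    p = (c + 1, -Real.sqrt 3 * c - 1 / Real.sqrt 3,
         s + 4 * Real.sqrt 3 * c - (8 * c + 4) / Real.sqrt 3)}

/-- The half-plane E₁₂ in the Heisenberg group ℝ³. -/
noncomputable def E₁₂ : Set (ℝ × ℝ × ℝ) :=
  {p | ∃ c s : ℝ, 1 ≤ s ∧
    p = (c / Real.sqrt 3 + 1, c - 1 / Real.sqrt 3, s - 8 * c / 3 - 4 / Real.sqrt 3)}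

/-- The infinite sector E₁₃ in the Heisenberg group ℝ³. -/
noncomputable def E₁₃ : Set (ℝ × ℝ × ℝ) :=
  {p | ∃ a d : ℝ, a ∈ Set.Icc (-1 : ℝ) 1 ∧ 0 ≤ d ∧
    p = (a * d / Real.sqrt 3 + 1, d - 1 / Real.sqrt 3,
         1 - 2 * d - 2 * a * d / 3 - 4 / Real.sqrt 3)}

/-- The infinite sector E₁₄ in the Heisenberg group ℝ³. -/
noncomputable def E₁₄ : Set (ℝ × ℝ × ℝ) :=
  {p | ∃ a d : ℝ, a ∈ Set.Icc (-1 : ℝ) 1 ∧ d ≤ 0 ∧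
    p = (a * d / Real.sqrt 3 + 1, d - 1 / Real.sqrt 3,
         1 - 2 * d - 2 * a * d / 3 - 4 / Real.sqrt 3)}

/-- The piecewise linear plane E₁. -/
noncomputable def E₁ : Set (ℝ × ℝ × ℝ) := E₁₁ ∪ E₁₂ ∪ E₁₃ ∪ E₁₄

/-- The Heisenberg action of Aᵏ on ℝ³ ≅ ℂ × ℝ. -/
noncomputable def Ak (k : ℤ) : ℝ × ℝ × ℝ → ℝ × ℝ × ℝ :=
  fun p => (p.1 - 2 * k, p.2.1, p.2.2 + 4 * k * p.2.1 + 8 * k / Real.sqrt 3)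

/-- auxiliary: u-coordinate -/
noncomputable def uuE (p : ℝ × ℝ × ℝ) : ℝ := p.2.1 + 1 / Real.sqrt 3
noncomputable def wwE (p : ℝ × ℝ × ℝ) : ℝ := p.1 - 1
noncomputable def ggE (p : ℝ × ℝ × ℝ) : ℝ :=
  p.2.2 - 1 + 2 * p.2.1 + 2 * p.1 / Real.sqrt 3 + 4 / Real.sqrt 3

lemma mem_E₁_props {p : ℝ × ℝ × ℝ} (hp : p ∈ E₁) :
    3 * (wwE p)^2 ≤ (uuE p)^2 ∧
    (ggE p < 0 → Real.sqrt 3 * wwE p = -(uuE p)) ∧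
    (0 < ggE p → Real.sqrt 3 * wwE p = uuE p) := by
  have h3 : Real.sqrt 3 * Real.sqrt 3 = 3 := Real.mul_self_sqrt (by norm_num)
  have hsq : Real.sqrt 3 ^ 2 = 3 := Real.sq_sqrt (by norm_num)
  have hpos : (0:ℝ) < Real.sqrt 3 := Real.sqrt_pos.2 (by norm_num)
  have hne : Real.sqrt 3 ≠ 0 := ne_of_gt hpos
  rcases hp with ((h | h) | h) | h
  · obtain ⟨c, s, hs, rfl⟩ := h
    simp only [uuE, wwE, ggE]
    have hg : (s + 4 * Real.sqrt 3 * c - (8 * c + 4) / Real.sqrt 3) - 1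
        + 2 * (-Real.sqrt 3 * c - 1 / Real.sqrt 3)
        + 2 * (c + 1) / Real.sqrt 3 + 4 / Real.sqrt 3 = s - 1 := by
      field_simp
      linear_combination (2*c) * hsq
    refine ⟨by nlinarith [h3, sq_nonneg c], ?_, ?_⟩
    · intro _; ring_nf
    · intro hgpos; exfalso; rw [hg] at hgpos; linarith
  · obtain ⟨c, s, hs, rfl⟩ := h
    simp only [uuE, wwE, ggE]
    have hg : (s - 8 * c / 3 - 4 / Real.sqrt 3) - 1
        + 2 * (c - 1 / Real.sqrt 3)
        + 2 * (c / Real.sqrt 3 + 1) / Real.sqrt 3 + 4 / Real.sqrt 3 = s - 1 := by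
      field_simp
      ring_nf
      linear_combination (-2*c) * hsq
    have hw : (c / Real.sqrt 3 + 1 - 1)^2 = c^2/3 := by
      rw [add_sub_cancel_right, div_pow, hsq]
    have hu : (c - 1/Real.sqrt 3 + 1/Real.sqrt 3)^2 = c^2 := by ring
    refine ⟨by nlinarith [hw, hu], ?_, ?_⟩
    · intro hgneg; exfalso; rw [hg] at hgneg; linarith
    · intro _; field_simp; ring
  · obtain ⟨a, d, ⟨ha1, ha2⟩, hd, rfl⟩ := h
    simp only [uuE, wwE, ggE]
    have hg : (1 - 2 * d - 2 * a * d / 3 - 4 / Real.sqrt 3) - 1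
        + 2 * (d - 1 / Real.sqrt 3)
        + 2 * (a * d / Real.sqrt 3 + 1) / Real.sqrt 3 + 4 / Real.sqrt 3 = 0 := by
      field_simp
      ring_nf
      linear_combination (-2*d*a) * hsq
    refine ⟨?_, ?_, ?_⟩
    · have : (a * d / Real.sqrt 3 + 1 - 1)^2 = a^2 * d^2 / 3 := by
        field_simp; nlinarith [hsq]
      rw [this]
      have hu : (d - 1/Real.sqrt 3 + 1/Real.sqrt 3)^2 = d^2 := by ring
      have h1a : 0 ≤ (1-a)*(1+a) := mul_nonneg (by linarith) (by linarith)
      nlinarith [hu, mul_nonneg h1a (sq_nonneg d)]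
    · intro hgneg; exfalso; rw [hg] at hgneg; linarith
    · intro hgpos; exfalso; rw [hg] at hgpos; linarith
  · obtain ⟨a, d, ⟨ha1, ha2⟩, hd, rfl⟩ := h
    simp only [uuE, wwE, ggE]
    have hg : (1 - 2 * d - 2 * a * d / 3 - 4 / Real.sqrt 3) - 1
        + 2 * (d - 1 / Real.sqrt 3)
        + 2 * (a * d / Real.sqrt 3 + 1) / Real.sqrt 3 + 4 / Real.sqrt 3 = 0 := by
      field_simp
      ring_nf
      linear_combination (-2*d*a) * hsq
    refine ⟨?_, ?_, ?_⟩
    · have : (a * d / Real.sqrt 3 + 1 - 1)^2 = a^2 * d^2 / 3 := by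
        field_simp; nlinarith [hsq]
      rw [this]
      have hu : (d - 1/Real.sqrt 3 + 1/Real.sqrt 3)^2 = d^2 := by ring
      have h1a : 0 ≤ (1-a)*(1+a) := mul_nonneg (by linarith) (by linarith)
      nlinarith [hu, mul_nonneg h1a (sq_nonneg d)]
    · intro hgneg; exfalso; rw [hg] at hgneg; linarith
    · intro hgpos; exfalso; rw [hg] at hgpos; linarith

set_option maxHeartbeats 1000000 in
theorem E₁_disjoint_from_translates (k : ℤ) (hk : k ≠ 0) :
    Disjoint E₁ (Ak k '' E₁) := by
  have h3 : Real.sqrt 3 * Real.sqrt 3 = 3 := Real.mul_self_sqrt (by norm_num)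
  have hsq : Real.sqrt 3 ^ 2 = 3 := Real.sq_sqrt (by norm_num)
  have hpos : (0:ℝ) < Real.sqrt 3 := Real.sqrt_pos.2 (by norm_num)
  have hne : Real.sqrt 3 ≠ 0 := ne_of_gt hpos
  have hkR : (k:ℝ) ≠ 0 := Int.cast_ne_zero.2 hk
  have hk2 : (0:ℝ) < (k:ℝ)^2 := by positivity
  rw [Set.disjoint_left]
  rintro p hp ⟨q, hq, hAk⟩
  obtain ⟨h1p, h2p, h3p⟩ := mem_E₁_props hp
  obtain ⟨h1q, h2q, h3q⟩ := mem_E₁_props hq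
  have hx : p.1 = q.1 - 2*k := by rw [← hAk]; rfl
  have hy : p.2.1 = q.2.1 := by rw [← hAk]; rfl
  have ht : p.2.2 = q.2.2 + 4*k*q.2.1 + 8*k/Real.sqrt 3 := by rw [← hAk]; rfl
  have hu : uuE p = uuE q := by simp only [uuE, hy]
  have hwpq : wwE p = wwE q - 2*k := by simp only [wwE, hx]; ring
  have hg : ggE p = ggE q + 4*k*(uuE q) := by
    simp only [ggE, uuE, hx, hy, ht]
    field_simp
    ring
  set u := uuE q with hu_def
  set w := wwE q with hw_def
  rw [hu] at h1p h2p h3p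
  rw [hwpq] at h1p h2p h3p
  rcases lt_trichotomy ((k:ℝ) * u) 0 with hku | hku | hku
  · -- ggE p < ggE q : either ggE p < 0 or ggE q > 0
    have h4ku : 4*Real.sqrt 3*((k:ℝ)*u) < 0 :=
      mul_neg_of_pos_of_neg (by positivity) hku
    have hgl : ggE p < ggE q := by nlinarith [hg, hku]
    rcases lt_or_ge (ggE p) 0 with hgp | hgp
    · have he := h2p hgp
      have hkey : 3 * w^2 = u^2 - 4*Real.sqrt 3*((k:ℝ)*u) + 12*(k:ℝ)^2 := by
        linear_combination (Real.sqrt 3 * w - u + 2*Real.sqrt 3*(k:ℝ)) * he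
          + (4*(k:ℝ)^2 - w^2) * hsq
      linarith [h1q, hkey, h4ku, hk2]
    · have hgq : 0 < ggE q := by linarith
      have he := h3q hgq
      have hkey : 3 * (w - 2*(k:ℝ))^2
          = u^2 - 4*Real.sqrt 3*((k:ℝ)*u) + 12*(k:ℝ)^2 := by
        linear_combination (Real.sqrt 3 * w + u - 4*Real.sqrt 3*(k:ℝ)) * he
          + (4*(k:ℝ)*w - w^2) * hsq
      linarith [h1p, hkey, h4ku, hk2]
  · have hu0 : u = 0 := by
      rcases mul_eq_zero.1 hku with h | h
      · exact absurd h hkR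
      · exact h
    rw [hu0] at h1p h1q
    have hwq : w = 0 := by nlinarith [sq_nonneg w]
    have hwp : w - 2*(k:ℝ) = 0 := by nlinarith [sq_nonneg (w - 2*(k:ℝ))]
    rw [hwq] at hwp
    exact hkR (by linarith)
  · have h4ku : 0 < 4*Real.sqrt 3*((k:ℝ)*u) :=
      mul_pos (by positivity) hku
    have hgl : ggE q < ggE p := by nlinarith [hg, hku]
    rcases lt_or_ge (ggE q) 0 with hgq | hgq
    · have he := h2q hgq
      have hkey : 3 * (w - 2*(k:ℝ))^2
          = u^2 + 4*Real.sqrt 3*((k:ℝ)*u) + 12*(k:ℝ)^2 := by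
        linear_combination (Real.sqrt 3 * w - u - 4*Real.sqrt 3*(k:ℝ)) * he
          + (4*(k:ℝ)*w - w^2) * hsq
      linarith [h1p, hkey, h4ku, hk2]
    · have hgp : 0 < ggE p := by linarith
      have he := h3p hgp
      have hkey : 3 * w^2 = u^2 + 4*Real.sqrt 3*((k:ℝ)*u) + 12*(k:ℝ)^2 := by
        linear_combination (Real.sqrt 3 * w + u + 2*Real.sqrt 3*(k:ℝ)) * he
          + (4*(k:ℝ)^2 - w^2) * hsq
      linarith [h1q, hkey, h4ku, hk2]
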